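/- In the setting of the variable metric proximal point algorithm xₙ₊₁ = xₙ + λₙ(J^{Wₙ}_{γₙA} xₙ + aₙ − xₙ) (A maximally monotone with nonempty zero set C, λₙ ∈ [ε, 2−ε], γₙ ≥ ε, ∑‖aₙ‖ < +∞, α·Id ≼ Wₙ, sup‖Wₙ‖ < +∞, (1+ηₙ)Wₙ ≽ Wₙ₊₁ with (ηₙ) summable), if A is pointwise uniformly monotone on C — for every x ∈ C there is an increasing function φ : [0,+∞[ → [0,+∞] vanishing only at 0 with ⟨x − y, u − v⟩ ≥ φ(‖x − y‖) for all u ∈ Ax and (y,v) in the graph of A — then (xₙ) converges strongly to the unique point of C. -/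

import Mathlib

open Filter Topology Pointwise

def MaxMonotone {H : Type*} [NormedAddCommGroup H] [InnerProductSpace ℝ H]
    (A : H → Set H) : Prop :=
  (∀ x y u v, u ∈ A x → v ∈ A y → 0 ≤ (inner ℝ (x - y) (u - v) : ℝ)) ∧
  (∀ x u, (∀ y v, v ∈ A y → 0 ≤ (inner ℝ (x - y) (u - v) : ℝ)) → u ∈ A x)

private lemma aux_contract (q : ℝ) (hq0 : 0 ≤ q) (hq1 : q < 1)
    (u b : ℕ → ℝ) (hu : ∀ n, 0 ≤ u n)
    (hrec : ∀ n, u (n + 1) ≤ q * u n + b n)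
    (hb : Tendsto b atTop (𝓝 0)) :
    Tendsto u atTop (𝓝 0) := by
  rw [Metric.tendsto_atTop]
  intro δ hδ
  have hq' : 0 < 1 - q := by linarith
  obtain ⟨N, hN⟩ := (Metric.tendsto_atTop.1 hb) ((1 - q) * δ / 2) (by positivity)
  have key : ∀ k, u (N + k) ≤ q ^ k * u N + δ / 2 := by
    intro k
    induction k with
    | zero => simp; linarith [hδ]
    | succ k ih =>
      have hb' : b (N + k) ≤ (1 - q) * δ / 2 := by
        have h := hN (N + k) (Nat.le_add_right _ _)
        rw [Real.dist_eq, sub_zero] at h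
        exact (le_abs_self _).trans h.le
      have h2 := hrec (N + k)
      have h3 : N + (k + 1) = (N + k) + 1 := by omega
      rw [h3]
      calc u ((N + k) + 1) ≤ q * u (N + k) + b (N + k) := h2
        _ ≤ q * (q ^ k * u N + δ / 2) + (1 - q) * δ / 2 := by
            have := mul_le_mul_of_nonneg_left ih hq0
            linarith
        _ = q ^ (k + 1) * u N + (q * δ / 2 + (1 - q) * δ / 2) := by ring
        _ ≤ q ^ (k + 1) * u N + δ / 2 := by nlinarith
  have hpow : Tendsto (fun k => q ^ k * u N) atTop (𝓝 0) := by
    have := (tendsto_pow_atTop_nhds_zero_of_lt_one hq0 hq1).mul_const (u N)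
    simpa using this
  obtain ⟨K, hK⟩ := (Metric.tendsto_atTop.1 hpow) (δ / 2) (by positivity)
  refine ⟨N + K, fun n hn => ?_⟩
  obtain ⟨k, rfl⟩ : ∃ k, n = N + k := ⟨n - N, by omega⟩
  have hk : K ≤ k := by omega
  have h1 := hK k hk
  rw [Real.dist_eq, sub_zero] at h1
  have h2 := (le_abs_self _).trans_lt h1
  rw [Real.dist_eq, sub_zero, abs_of_nonneg (hu _)]
  linarith [key k]

set_option maxHeartbeats 1000000 in
theorem stmt_18 {H : Type*} [NormedAddCommGroup H] [InnerProductSpace ℝ H] [CompleteSpace H]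
    (α : ℝ) (hα : 0 < α)
    (A : H → Set H) (hA : MaxMonotone A) (hzero : ∃ z : H, 0 ∈ A z)
    (a : ℕ → H) (ha : Summable (fun n => ‖a n‖))
    (η : ℕ → ℝ) (hη0 : ∀ n, 0 ≤ η n) (hη : Summable η)
    (W : ℕ → H →L[ℝ] H) (hsa : ∀ n, IsSelfAdjoint (W n))
    (hlb : ∀ n (x : H), α * ‖x‖ ^ 2 ≤ (inner ℝ (W n x) x : ℝ))
    (hbd : ∃ μ : ℝ, ∀ n, ‖W n‖ ≤ μ)
    (hmono : ∀ n (x : H), (inner ℝ (W (n + 1) x) x : ℝ) ≤ (1 + η n) * (inner ℝ (W n x) x : ℝ))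
    (ε : ℝ) (hε0 : 0 < ε) (hε1 : ε < 1)
    (γ : ℕ → ℝ) (hγ : ∀ n, ε ≤ γ n)
    (lam : ℕ → ℝ) (hlam : ∀ n, lam n ∈ Set.Icc ε (2 - ε))
    (J : ℕ → H → H)
    (hJ : ∀ n (y : H), W n y - W n (J n y) ∈ γ n • A (J n y))
    (x : ℕ → H)
    (hrec : ∀ n, x (n + 1) = x n + lam n • (J n (x n) + a n - x n))
    (hunif : ∀ xc : H, 0 ∈ A xc → ∃ φ : ℝ → ENNReal, Monotone φ ∧ φ 0 = 0 ∧
      (∀ t : ℝ, 0 < t → φ t ≠ 0) ∧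
      ∀ (u y v : H), u ∈ A xc → v ∈ A y →
        φ ‖xc - y‖ ≤ ENNReal.ofReal (inner ℝ (xc - y) (u - v) : ℝ)) :
    ∃ x' : H, (∀ z : H, 0 ∈ A z ↔ z = x') ∧ Tendsto x atTop (𝓝 x') := by
  classical
  obtain ⟨p, hp⟩ := hzero
  obtain ⟨φ, hφm, hφ0, hφpos, hφkey⟩ := hunif p hp
  -- uniqueness of the zero
  have huniq : ∀ z : H, 0 ∈ A z ↔ z = p := by
    intro z
    constructor
    · intro hz
      by_contra hne
      have h1 : (0 : ℝ) < ‖p - z‖ := by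
        rw [norm_pos_iff, sub_ne_zero]
        exact fun h => hne h.symm
      have h2 := hφkey 0 z 0 hp hz
      simp only [sub_zero, inner_zero_left, inner_zero_right, ENNReal.ofReal_zero,
        nonpos_iff_eq_zero] at h2
      exact hφpos _ h1 h2
    · rintro rfl; exact hp
  refine ⟨p, huniq, ?_⟩
  -- setup
  obtain ⟨μ0, hμ0⟩ := hbd
  set m := max μ0 α with hm_def
  have hm : ∀ n, ‖W n‖ ≤ m := fun n => (hμ0 n).trans (le_max_left _ _)
  have hαm : α ≤ m := le_max_right _ _
  have hm0 : (0 : ℝ) < m := lt_of_lt_of_le hα hαm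
  have hsymm : ∀ n (u v : H), (inner ℝ (W n u) v : ℝ) = inner ℝ u (W n v) := fun n =>
    (ContinuousLinearMap.isSelfAdjoint_iff_isSymmetric.1 (hsa n))
  have hQpos : ∀ n (z : H), (0 : ℝ) ≤ inner ℝ (W n z) z := fun n z =>
    le_trans (by positivity) (hlb n z)
  have hQnorm : ∀ n (z w : H), (inner ℝ (W n z) w : ℝ) ≤ m * ‖z‖ * ‖w‖ := by
    intro n z w
    calc (inner ℝ (W n z) w : ℝ) ≤ ‖W n z‖ * ‖w‖ := real_inner_le_norm _ _
      _ ≤ (m * ‖z‖) * ‖w‖ := by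
          apply mul_le_mul_of_nonneg_right _ (norm_nonneg _)
          exact ((W n).le_opNorm z).trans
            (mul_le_mul_of_nonneg_right (hm n) (norm_nonneg _))
      _ = m * ‖z‖ * ‖w‖ := by ring
  have hγpos : ∀ n, (0 : ℝ) < γ n := fun n => lt_of_lt_of_le hε0 (hγ n)
  set y : ℕ → H := fun n => J n (x n) with hy_def
  have hv : ∀ n, ∃ w, w ∈ A (y n) ∧ γ n • w = W n (x n) - W n (y n) := by
    intro n
    obtain ⟨w, hw, hweq⟩ := Set.mem_smul_set.1 (hJ n (x n))
    exact ⟨w, hw, hweq⟩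
  choose v hvA hveq using hv
  set s : ℕ → ℝ := fun n => inner ℝ (y n - p) (v n) with hs_def
  have hs0 : ∀ n, 0 ≤ s n := by
    intro n
    have := hA.1 (y n) p (v n) 0 (hvA n) hp
    simpa using this
  have hφs : ∀ n, φ ‖p - y n‖ ≤ ENNReal.ofReal (s n) := by
    intro n
    have h := hφkey 0 (y n) (v n) hp (hvA n)
    have heq : (inner ℝ (p - y n) ((0 : H) - v n) : ℝ) = s n := by
      rw [zero_sub, ← neg_sub (y n) p, inner_neg_neg]
    rwa [heq] at h
  set r : ℕ → ℝ := fun n => inner ℝ (W n (x n - p)) (x n - p) with hr_def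
  have hr0 : ∀ n, 0 ≤ r n := fun n => hQpos n _
  set β : ℕ → ℝ := fun n => Real.sqrt (r n) with hβ_def
  have hβ0 : ∀ n, 0 ≤ β n := fun n => Real.sqrt_nonneg _
  have hβ2 : ∀ n, β n ^ 2 = r n := fun n => Real.sq_sqrt (hr0 n)
  set sa : ℝ := Real.sqrt α with hsa_def
  have hsa0 : 0 < sa := Real.sqrt_pos.2 hα
  have hsa2 : sa ^ 2 = α := Real.sq_sqrt hα.le
  set c : ℕ → ℝ := fun n => (2 * m / sa) * ‖a n‖ with hc_def
  have hc0 : ∀ n, 0 ≤ c n := fun n => by positivity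
  have hc_sum : Summable c := ha.mul_left _
  -- quadratic form expansion
  have hQexp : ∀ n (z w : H) (t : ℝ),
      (inner ℝ (W n (z + t • w)) (z + t • w) : ℝ) =
        inner ℝ (W n z) z + 2 * t * inner ℝ (W n z) w + t ^ 2 * inner ℝ (W n w) w := by
    intro n z w t
    have hc' : (inner ℝ (W n w) z : ℝ) = inner ℝ (W n z) w := by
      rw [hsymm n w z, real_inner_comm]
    simp only [map_add, map_smul, inner_add_left, inner_add_right,
      real_inner_smul_left, real_inner_smul_right, hc']
    ring
  -- one-step estimate
  have step : ∀ n, (inner ℝ (W n (x (n + 1) - p)) (x (n + 1) - p) : ℝ) ≤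
      (β n + c n) ^ 2 - 2 * ε ^ 2 * s n := by
    intro n
    obtain ⟨hL1, hL2⟩ := hlam n
    have hL0 : 0 < lam n := lt_of_lt_of_le hε0 hL1
    have hL2' : lam n ≤ 2 := by linarith
    set L := lam n
    set d : H := y n - x n with hd_def
    set u : H := x n - p with hu_def
    set X : H := u + L • d with hX_def
    have hid : x (n + 1) - p = X + L • a n := by
      rw [hrec n, hX_def, hu_def, hd_def]
      module
    -- cross term identity
    have hcross : (inner ℝ (W n u) d : ℝ) = -(γ n * s n) - inner ℝ (W n d) d := by
      have h1 : γ n • v n = W n (x n - y n) := by rw [hveq n, map_sub]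
      have h2 : γ n * s n = inner ℝ (y n - p) (W n (x n - y n)) := by
        rw [← h1, real_inner_smul_right]
      have h3 : x n - y n = -d := by rw [hd_def]; abel
      have h4 : y n - p = u + d := by rw [hu_def, hd_def]; abel
      rw [h3, h4, map_neg] at h2
      rw [inner_neg_right, inner_add_left] at h2
      have e1 : (inner ℝ u (W n d) : ℝ) = inner ℝ (W n u) d := (hsymm n u d).symm
      have e2 : (inner ℝ d (W n d) : ℝ) = inner ℝ (W n d) d := real_inner_comm _ _
      rw [e1, e2] at h2
      linarith
    have hQdd : (0 : ℝ) ≤ inner ℝ (W n d) d := hQpos n d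
    have hQXX : (inner ℝ (W n X) X : ℝ) =
        r n - 2 * L * (γ n * s n) - L * (2 - L) * inner ℝ (W n d) d := by
      rw [hX_def, hQexp n u d L, hcross]
      rw [hr_def]
      ring
    have hεL : ε ^ 2 * s n ≤ L * (γ n * s n) := by
      have h1 : ε * ε ≤ L * γ n := mul_le_mul hL1 (hγ n) hε0.le hL0.le
      have h2 := mul_le_mul_of_nonneg_right h1 (hs0 n)
      calc ε ^ 2 * s n = ε * ε * s n := by ring
        _ ≤ L * γ n * s n := h2
        _ = L * (γ n * s n) := by ring
    have hA1 : 0 ≤ L * (γ n * s n) :=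
      mul_nonneg hL0.le (mul_nonneg (hγpos n).le (hs0 n))
    have hA2 : 0 ≤ L * (2 - L) * inner ℝ (W n d) d :=
      mul_nonneg (mul_nonneg hL0.le (by linarith)) hQdd
    have hXr' : (inner ℝ (W n X) X : ℝ) ≤ r n := by
      rw [hQXX]; linarith
    have hXr : (inner ℝ (W n X) X : ℝ) ≤ r n - 2 * ε ^ 2 * s n := by
      rw [hQXX]; linarith
    have hXnorm : sa * ‖X‖ ≤ β n := by
      have h1 : (sa * ‖X‖) ^ 2 ≤ r n := by
        rw [mul_pow, hsa2]
        calc α * ‖X‖ ^ 2 ≤ inner ℝ (W n X) X := hlb n X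
          _ ≤ r n := hXr'
      calc sa * ‖X‖ = Real.sqrt ((sa * ‖X‖) ^ 2) := (Real.sqrt_sq (by positivity)).symm
        _ ≤ Real.sqrt (r n) := Real.sqrt_le_sqrt h1
        _ = β n := rfl
    have t1 : 2 * L * (inner ℝ (W n X) (a n) : ℝ) ≤ 4 * (m * ‖X‖ * ‖a n‖) := by
      have h1 : (inner ℝ (W n X) (a n) : ℝ) ≤ m * ‖X‖ * ‖a n‖ := hQnorm n X (a n)
      nlinarith [mul_nonneg (mul_nonneg hm0.le (norm_nonneg X)) (norm_nonneg (a n))]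
    have t2 : 4 * (m * ‖X‖ * ‖a n‖) ≤ 2 * c n * β n := by
      rw [hc_def]
      rw [show 2 * (2 * m / sa * ‖a n‖) * β n = 4 * m * ‖a n‖ * β n / sa by ring]
      rw [le_div_iff₀ hsa0]
      nlinarith [mul_le_mul_of_nonneg_left hXnorm
        (by positivity : (0:ℝ) ≤ 4 * m * ‖a n‖)]
    have t3 : L ^ 2 * (inner ℝ (W n (a n)) (a n) : ℝ) ≤ 4 * (m * ‖a n‖ * ‖a n‖) := by
      have h1 : (inner ℝ (W n (a n)) (a n) : ℝ) ≤ m * ‖a n‖ * ‖a n‖ := hQnorm n (a n) (a n)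
      have h2 : (0 : ℝ) ≤ inner ℝ (W n (a n)) (a n) := hQpos n (a n)
      have hL4 : L ^ 2 ≤ 4 := by nlinarith
      calc L ^ 2 * (inner ℝ (W n (a n)) (a n) : ℝ)
          ≤ 4 * (inner ℝ (W n (a n)) (a n) : ℝ) := mul_le_mul_of_nonneg_right hL4 h2
        _ ≤ 4 * (m * ‖a n‖ * ‖a n‖) := by linarith
    have t4 : 4 * (m * ‖a n‖ * ‖a n‖) ≤ c n ^ 2 := by
      rw [hc_def]
      rw [show (2 * m / sa * ‖a n‖) ^ 2 = 4 * m ^ 2 * ‖a n‖ ^ 2 / sa ^ 2 by ring, hsa2]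
      rw [le_div_iff₀ hα]
      nlinarith [norm_nonneg (a n), sq_nonneg (‖a n‖),
        mul_nonneg (mul_nonneg hm0.le (sub_nonneg.2 hαm)) (sq_nonneg (‖a n‖))]
    rw [hid, hQexp n X (a n) L]
    have hexpand : (β n + c n) ^ 2 = r n + 2 * c n * β n + c n ^ 2 := by
      rw [← hβ2 n]; ring
    rw [hexpand]
    linarith
  -- metric comparison between steps
  have hstep2 : ∀ n, r (n + 1) ≤ (1 + η n) * ((β n + c n) ^ 2 - 2 * ε ^ 2 * s n) := by
    intro n
    have h1 := hmono n (x (n + 1) - p)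
    have h2 := step n
    have h3 : (0 : ℝ) ≤ 1 + η n := by linarith [hη0 n]
    calc r (n + 1) ≤ (1 + η n) * (inner ℝ (W n (x (n + 1) - p)) (x (n + 1) - p) : ℝ) := h1
      _ ≤ (1 + η n) * ((β n + c n) ^ 2 - 2 * ε ^ 2 * s n) :=
          mul_le_mul_of_nonneg_left h2 h3
  -- β recursion
  have hβrec : ∀ n, β (n + 1) ≤ (1 + η n) * (β n + c n) := by
    intro n
    have h1 : r (n + 1) ≤ ((1 + η n) * (β n + c n)) ^ 2 := by
      have h2 := hstep2 n
      have h3 : (1 + η n) * ((β n + c n) ^ 2 - 2 * ε ^ 2 * s n) ≤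
          ((1 + η n) * (β n + c n)) ^ 2 := by
        have hT : 0 ≤ (β n + c n) ^ 2 := sq_nonneg _
        have h5 : (1 + η n) * (β n + c n) ^ 2 ≤ (1 + η n) ^ 2 * (β n + c n) ^ 2 := by
          nlinarith [mul_nonneg (mul_nonneg
            (by linarith [hη0 n] : (0:ℝ) ≤ 1 + η n) (hη0 n)) hT]
        have h6 : 0 ≤ (1 + η n) * (2 * ε ^ 2 * s n) :=
          mul_nonneg (by linarith [hη0 n])
            (mul_nonneg (by positivity) (hs0 n))
        have h7 : (1 + η n) * ((β n + c n) ^ 2 - 2 * ε ^ 2 * s n) =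
            (1 + η n) * (β n + c n) ^ 2 - (1 + η n) * (2 * ε ^ 2 * s n) := by ring
        have h8 : ((1 + η n) * (β n + c n)) ^ 2 = (1 + η n) ^ 2 * (β n + c n) ^ 2 := by
          ring
        linarith
      linarith
    calc β (n + 1) = Real.sqrt (r (n + 1)) := rfl
      _ ≤ Real.sqrt (((1 + η n) * (β n + c n)) ^ 2) := Real.sqrt_le_sqrt h1
      _ = (1 + η n) * (β n + c n) := Real.sqrt_sq
          (mul_nonneg (by linarith [hη0 n]) (by positivity))
  -- boundedness of β
  set C : ℝ := ∑' n, c n with hC_def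
  have hC0 : 0 ≤ C := tsum_nonneg hc0
  set Hη : ℝ := ∑' n, η n with hHη_def
  have hHη0 : 0 ≤ Hη := tsum_nonneg hη0
  set M : ℝ := Real.exp Hη * (β 0 + C) with hM_def
  have hM0 : 0 ≤ M := by positivity
  have hβM : ∀ n, β n ≤ M := by
    have hP1 : ∀ n, (1 : ℝ) ≤ ∏ k ∈ Finset.range n, (1 + η k) := by
      intro n
      induction n with
      | zero => simp
      | succ n ih =>
        rw [Finset.prod_range_succ]
        nlinarith [hη0 n]
    have hclaim : ∀ n, β n ≤ (∏ k ∈ Finset.range n, (1 + η k)) *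
        (β 0 + ∑ k ∈ Finset.range n, c k) := by
      intro n
      induction n with
      | zero => simp
      | succ n ih =>
        have h1 := hβrec n
        have h2 : β n + c n ≤ (∏ k ∈ Finset.range n, (1 + η k)) *
            (β 0 + ∑ k ∈ Finset.range n, c k) + c n := by linarith
        have h3 : (∏ k ∈ Finset.range n, (1 + η k)) *
            (β 0 + ∑ k ∈ Finset.range n, c k) + c n ≤
            (∏ k ∈ Finset.range n, (1 + η k)) *
            (β 0 + ∑ k ∈ Finset.range (n + 1), c k) := by
          rw [Finset.sum_range_succ]
          have := hP1 n
          have hcn := hc0 n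
          nlinarith
        rw [Finset.prod_range_succ]
        have h4 : (0 : ℝ) ≤ 1 + η n := by linarith [hη0 n]
        calc β (n + 1) ≤ (1 + η n) * (β n + c n) := h1
          _ ≤ (1 + η n) * ((∏ k ∈ Finset.range n, (1 + η k)) *
              (β 0 + ∑ k ∈ Finset.range (n + 1), c k)) := by
              apply mul_le_mul_of_nonneg_left _ h4
              exact h2.trans h3
          _ = (∏ k ∈ Finset.range n, (1 + η k)) * (1 + η n) *
              (β 0 + ∑ k ∈ Finset.range (n + 1), c k) := by ring
    intro n
    have hPexp : (∏ k ∈ Finset.range n, (1 + η k)) ≤ Real.exp Hη := by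
      calc (∏ k ∈ Finset.range n, (1 + η k)) ≤ ∏ k ∈ Finset.range n, Real.exp (η k) := by
            apply Finset.prod_le_prod (fun k _ => by linarith [hη0 k])
            intro k _
            linarith [Real.add_one_le_exp (η k)]
        _ = Real.exp (∑ k ∈ Finset.range n, η k) := (Real.exp_sum _ _).symm
        _ ≤ Real.exp Hη := by
            apply Real.exp_le_exp.2
            exact Summable.sum_le_tsum _ (fun k _ => hη0 k) hη
    have hSC : ∑ k ∈ Finset.range n, c k ≤ C :=
      Summable.sum_le_tsum _ (fun k _ => hc0 k) hc_sum
    calc β n ≤ (∏ k ∈ Finset.range n, (1 + η k)) *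
        (β 0 + ∑ k ∈ Finset.range n, c k) := hclaim n
      _ ≤ Real.exp Hη * (β 0 + C) := by
          apply mul_le_mul hPexp (by linarith) (by positivity) (Real.exp_nonneg _)
      _ = M := rfl
  -- summability of s
  set e : ℕ → ℝ := fun n => η n * (M + C) ^ 2 + 2 * M * c n + c n ^ 2 with he_def
  have he0 : ∀ n, 0 ≤ e n := by
    intro n
    have := hη0 n; have := hc0 n
    positivity
  have hcsq_sum : Summable (fun n => c n ^ 2) := by
    apply Summable.of_nonneg_of_le (fun n => sq_nonneg _) (fun n => ?_) (hc_sum.mul_left C)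
    have h1 : c n ≤ C := Summable.le_tsum hc_sum n (fun k _ => hc0 k)
    nlinarith [hc0 n]
  have he_sum : Summable e := by
    apply Summable.add
    apply Summable.add
    · exact hη.mul_right _
    · exact hc_sum.mul_left _
    · exact hcsq_sum
  have hkey : ∀ n, r (n + 1) ≤ r n + e n - 2 * ε ^ 2 * s n := by
    intro n
    have h1 := hstep2 n
    have h2 : (1 + η n) * ((β n + c n) ^ 2 - 2 * ε ^ 2 * s n) ≤
        (β n + c n) ^ 2 + η n * (M + C) ^ 2 - 2 * ε ^ 2 * s n := by
      have hbc : β n + c n ≤ M + C := by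
        have := hβM n
        have := Summable.le_tsum hc_sum n (fun k _ => hc0 k)
        linarith
      have hbc0 : 0 ≤ β n + c n := by positivity
      have hsq : (β n + c n) ^ 2 ≤ (M + C) ^ 2 := by nlinarith
      have h7 : η n * (β n + c n) ^ 2 ≤ η n * (M + C) ^ 2 :=
        mul_le_mul_of_nonneg_left hsq (hη0 n)
      have h8 : 0 ≤ η n * (2 * ε ^ 2 * s n) :=
        mul_nonneg (hη0 n) (mul_nonneg (by positivity) (hs0 n))
      have h9 : (1 + η n) * ((β n + c n) ^ 2 - 2 * ε ^ 2 * s n) =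
          (β n + c n) ^ 2 + η n * (β n + c n) ^ 2
            - 2 * ε ^ 2 * s n - η n * (2 * ε ^ 2 * s n) := by ring
      linarith
    have h3 : (β n + c n) ^ 2 ≤ r n + 2 * M * c n + c n ^ 2 := by
      have h4 : (β n + c n) ^ 2 = r n + 2 * c n * β n + c n ^ 2 := by
        rw [← hβ2 n]; ring
      rw [h4]
      nlinarith [hβM n, hc0 n]
    rw [he_def]
    dsimp only
    linarith
  have hs_sum : Summable s := by
    set E : ℝ := ∑' n, e n with hE_def
    apply summable_of_sum_range_le hs0 (c := (r 0 + E) / (2 * ε ^ 2))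
    intro n
    rw [le_div_iff₀ (by positivity)]
    have h1 : ∀ k, 2 * ε ^ 2 * s k ≤ (r k - r (k + 1)) + e k := by
      intro k; linarith [hkey k]
    calc (∑ k ∈ Finset.range n, s k) * (2 * ε ^ 2)
        = ∑ k ∈ Finset.range n, 2 * ε ^ 2 * s k := by
          rw [Finset.sum_mul]; congr 1; ext k; ring
      _ ≤ ∑ k ∈ Finset.range n, ((r k - r (k + 1)) + e k) :=
          Finset.sum_le_sum (fun k _ => h1 k)
      _ = (r 0 - r n) + ∑ k ∈ Finset.range n, e k := by
          rw [Finset.sum_add_distrib, Finset.sum_range_sub']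
      _ ≤ r 0 + E := by
          have := hr0 n
          have := Summable.sum_le_tsum (Finset.range n) (fun k _ => he0 k) he_sum
          linarith
  have hs_tend : Tendsto s atTop (𝓝 0) := hs_sum.tendsto_atTop_zero
  -- convergence of y to p
  have hw : Tendsto (fun n => ‖p - y n‖) atTop (𝓝 0) := by
    rw [Metric.tendsto_atTop]
    intro δ hδ
    have hφδ : φ δ ≠ 0 := hφpos δ hδ
    by_cases htop : φ δ = ⊤
    · refine ⟨0, fun n _ => ?_⟩
      rw [Real.dist_eq, sub_zero, abs_of_nonneg (norm_nonneg _)]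
      by_contra hcon
      push_neg at hcon
      have h1 : φ δ ≤ ENNReal.ofReal (s n) := (hφm hcon).trans (hφs n)
      rw [htop, top_le_iff] at h1
      exact ENNReal.ofReal_ne_top h1
    · have hpos : 0 < (φ δ).toReal := ENNReal.toReal_pos hφδ htop
      obtain ⟨N, hN⟩ := (Metric.tendsto_atTop.1 hs_tend) ((φ δ).toReal) hpos
      refine ⟨N, fun n hn => ?_⟩
      rw [Real.dist_eq, sub_zero, abs_of_nonneg (norm_nonneg _)]
      by_contra hcon
      push_neg at hcon
      have h1 : φ δ ≤ ENNReal.ofReal (s n) := (hφm hcon).trans (hφs n)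
      have h2 : ENNReal.ofReal (s n) < φ δ := by
        have h3 := hN n hn
        rw [Real.dist_eq, sub_zero] at h3
        have h4 : s n < (φ δ).toReal := (le_abs_self _).trans_lt h3
        calc ENNReal.ofReal (s n) < ENNReal.ofReal ((φ δ).toReal) :=
              (ENNReal.ofReal_lt_ofReal_iff hpos).2 h4
          _ = φ δ := ENNReal.ofReal_toReal htop
      exact absurd h1 h2.not_ge
  -- final contraction argument
  have ha0 : Tendsto (fun n => ‖a n‖) atTop (𝓝 0) := ha.tendsto_atTop_zero
  have hb_tend : Tendsto (fun n => 2 * (‖p - y n‖ + ‖a n‖)) atTop (𝓝 0) := by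
    have := ((hw.add ha0).const_mul 2)
    simpa using this
  have hurec : ∀ n, ‖x (n + 1) - p‖ ≤ (1 - ε) * ‖x n - p‖ + 2 * (‖p - y n‖ + ‖a n‖) := by
    intro n
    obtain ⟨hL1, hL2⟩ := hlam n
    have hL0 : 0 < lam n := lt_of_lt_of_le hε0 hL1
    have hid : x (n + 1) - p =
        (1 - lam n) • (x n - p) + lam n • (y n - p) + lam n • a n := by
      rw [hrec n, hy_def]
      module
    rw [hid]
    have h1 : ‖(1 - lam n) • (x n - p) + lam n • (y n - p) + lam n • a n‖ ≤
        ‖(1 - lam n) • (x n - p)‖ + ‖lam n • (y n - p)‖ + ‖lam n • a n‖ :=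
      norm_add₃_le
    have h2 : ‖(1 - lam n) • (x n - p)‖ ≤ (1 - ε) * ‖x n - p‖ := by
      rw [norm_smul, Real.norm_eq_abs]
      apply mul_le_mul_of_nonneg_right _ (norm_nonneg _)
      rw [abs_le]
      constructor <;> linarith
    have h3 : ‖lam n • (y n - p)‖ ≤ 2 * ‖p - y n‖ := by
      rw [norm_smul, Real.norm_eq_abs, abs_of_pos hL0, norm_sub_rev]
      nlinarith [norm_nonneg (p - y n)]
    have h4 : ‖lam n • a n‖ ≤ 2 * ‖a n‖ := by
      rw [norm_smul, Real.norm_eq_abs, abs_of_pos hL0]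
      nlinarith [norm_nonneg (a n)]
    linarith
  have hfinal : Tendsto (fun n => ‖x n - p‖) atTop (𝓝 0) :=
    aux_contract (1 - ε) (by linarith) (by linarith)
      (fun n => ‖x n - p‖) (fun n => 2 * (‖p - y n‖ + ‖a n‖))
      (fun n => norm_nonneg _) hurec hb_tend
  rw [tendsto_iff_norm_sub_tendsto_zero]
  exact hfinal
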